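/- arXiv:2107.11160 — 2 statements merged into one kernel-verified Lean document; each statement's English description precedes it below -/
import Mathlib

section
/- For all ℓ ≥ 2, the stopping time of 2^ℓ − 1 is at least ℓ, i.e., T^[k](2^ℓ − 1) ≥ 2^ℓ − 1 for all 1 ≤ k < ℓ. -/
def T (n : ℕ) : ℕ := if n % 2 = 0 then n / 2 else (3 * n + 1) / 2

/-- number of binary digits of `n` (for `n ≥ 1`) -/
def numDigits (n : ℕ) : ℕ := Nat.log 2 n + 1

def jp (n : ℕ) : ℕ := T^[numDigits n] n

def syr (x : ℕ) : ℕ := (3 * x + 1) / 2 ^ (padicValNat 2 (3 * x + 1))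

def sjp (n : ℕ) : ℕ := syr^[numDigits n] n

lemma T_step (j m : ℕ) (hm : 1 ≤ m) :
    T (3 ^ j * 2 ^ m - 1) = 3 ^ (j + 1) * 2 ^ (m - 1) - 1 := by
  obtain ⟨m', rfl⟩ : ∃ m', m = m' + 1 := ⟨m - 1, by omega⟩
  have h1 : 1 ≤ 3 ^ j * 2 ^ (m' + 1) := Nat.one_le_iff_ne_zero.mpr (by positivity)
  have heq : 3 ^ j * 2 ^ (m' + 1) = 2 * (3 ^ j * 2 ^ m') := by ring
  unfold T
  have hodd : (3 ^ j * 2 ^ (m' + 1) - 1) % 2 = 1 := by omega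
  rw [if_neg (by omega)]
  have hp : (2:ℕ) ^ (m' + 1) = 2 * 2 ^ m' := by ring
  have : 3 * (3 ^ j * 2 ^ (m' + 1) - 1) + 1 = 2 * (3 ^ (j + 1) * 2 ^ m') - 2 := by
    have h3 : 3 * (3 ^ j * (2 * 2 ^ m')) = 2 * (3 ^ (j+1) * 2 ^ m') := by ring
    have h2 : 1 ≤ 3 ^ (j+1) * 2 ^ m' := Nat.one_le_iff_ne_zero.mpr (by positivity)
    rw [hp] at h1 ⊢
    omega
  rw [this]
  have h2 : 1 ≤ 3 ^ (j+1) * 2 ^ m' := Nat.one_le_iff_ne_zero.mpr (by positivity)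
  simp only [Nat.add_sub_cancel]
  omega

lemma T_iter (ℓ k : ℕ) (hk : k ≤ ℓ) :
    T^[k] (2 ^ ℓ - 1) = 3 ^ k * 2 ^ (ℓ - k) - 1 := by
  induction k with
  | zero => simp
  | succ n ih =>
      rw [Function.iterate_succ_apply', ih (by omega)]
      have he : ℓ - n = (ℓ - (n + 1)) + 1 := by omega
      rw [he, T_step n _ (by omega)]
      simp

theorem stopping_time_mersenne_ge (ℓ : ℕ) (hℓ : 2 ≤ ℓ) :
    ∀ k, 1 ≤ k → k < ℓ → 2 ^ ℓ - 1 ≤ T^[k] (2 ^ ℓ - 1) := by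
  intro k hk1 hkℓ
  rw [T_iter ℓ k (by omega)]
  have : 2 ^ ℓ ≤ 3 ^ k * 2 ^ (ℓ - k) := by
    calc 2 ^ ℓ = 2 ^ k * 2 ^ (ℓ - k) := by rw [← pow_add]; congr 1; omega
    _ ≤ 3 ^ k * 2 ^ (ℓ - k) :=
        Nat.mul_le_mul_right _ (Nat.pow_le_pow_left (by norm_num) k)
  omega
end

section
/- For n ≥ 3, if the falling time ft(n) is finite (i.e., some iterate of jp applied to n falls below n) for every n ≥ 3, then for every n ≥ 2 some iterate of T applied to n falls below n. -/
lemma jp_iter_eq (k n : ℕ) : ∃ m, k ≤ m ∧ jp^[k] n = T^[m] n := by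
  induction k with
  | zero => exact ⟨0, le_rfl, rfl⟩
  | succ k ih =>
    obtain ⟨m, hm, he⟩ := ih
    refine ⟨numDigits (jp^[k] n) + m, ?_, ?_⟩
    · have : 1 ≤ numDigits (jp^[k] n) := Nat.succ_le_succ (Nat.zero_le _)
      omega
    · rw [Function.iterate_succ_apply', he, Function.iterate_add_apply]
      rw [← he]; rfl

theorem ft_finite_implies_collatz
    (h : ∀ n, 3 ≤ n → ∃ k, 1 ≤ k ∧ jp^[k] n < n) :
    ∀ n, 2 ≤ n → ∃ s, 1 ≤ s ∧ T^[s] n < n := by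
  intro n hn
  rcases eq_or_lt_of_le hn with h2 | h3
  · refine ⟨1, le_rfl, ?_⟩
    rw [← h2]; decide
  · obtain ⟨k, hk, hlt⟩ := h n h3
    obtain ⟨m, hm, he⟩ := jp_iter_eq k n
    exact ⟨m, le_trans hk hm, he ▸ hlt⟩
end
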